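/- arXiv:1601.07005 — 2 statements merged into one kernel-verified Lean document; each statement's English description precedes it below -/
import Mathlib

section
/- Let G be an ultragraph, and suppose there is n ≥ 1 with X₁, …, Xₙ nonempty and (⋃_{e∈𝒢¹} r(e)) ∪ s(𝒢¹) = ⋃_{i=1}^{n}(X̄ᵢ ∪ Iᵢ). Then: (1) distinct extreme vertices in the same level Xₙ are disjoint; (2) for A ∈ X_N^fin and e with s(e) ∈ A, r(e) ∈ ⋃_{i=1}^{N−1} X_i^fin; (3) for v ∈ I_N and e ∈ s⁻¹(v), r(e) ∈ ⋃_{i=1}^{N} X_i^fin; (4) for v ∈ X_N^ini and e ∈ s⁻¹(v), r(e) ⊆ ⋃_{i=1}^{n}((⋃_{A∈X_i^fin} A) ∪ Iᵢ) ∪ ⋃_{i=N+1}^{n} X_i^ini. -/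
open MeasureTheory Filter Set
open scoped ENNReal

universe u v w

structure Ultragraph (V : Type u) (E : Type v) where
  s : E → V
  r : E → Set V
  r_nonempty : ∀ e, (r e).Nonempty

namespace Ultragraph

variable {V : Type u} {E : Type v}

/-- The lattice `𝒢⁰` of Tomforde (with `∅` included, so that `p_∅ = 0` makes sense). -/
inductive InG0 (G : Ultragraph V E) : Set V → Prop
  | empty : InG0 G ∅
  | singleton (v : V) : InG0 G {v}
  | range (e : E) : InG0 G (G.r e)
  | union {A B : Set V} : InG0 G A → InG0 G B → InG0 G (A ∪ B)
  | inter {A B : Set V} : InG0 G A → InG0 G B → InG0 G (A ∩ B)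

/-- A `G`-branching system on a measure space `(X, μ)`. -/
structure BranchingSystem (G : Ultragraph V E) (X : Type w) [MeasurableSpace X]
    (μ : Measure X) where
  R : E → Set X
  D : Set V → Set X
  f : E → X → X
  finv : E → X → X
  measurableSet_R : ∀ e, MeasurableSet (R e)
  measurableSet_D : ∀ A, G.InG0 A → MeasurableSet (D A)
  ae_disjoint : ∀ e e', e ≠ e' → μ (R e ∩ R e') = 0
  D_empty : D ∅ = ∅
  D_inter : ∀ A B, G.InG0 A → G.InG0 B → (D A ∩ D B : Set X) =ᵐ[μ] (D (A ∩ B) : Set X)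
  D_union : ∀ A B, G.InG0 A → G.InG0 B → (D A ∪ D B : Set X) =ᵐ[μ] (D (A ∪ B) : Set X)
  R_subset_D : ∀ e, μ (R e \ D {G.s e}) = 0
  D_eq_iUnion : ∀ v, {e | G.s e = v}.Finite → {e | G.s e = v}.Nonempty →
    (D {v} : Set X) =ᵐ[μ] (⋃ e ∈ {e | G.s e = v}, R e : Set X)
  measurable_f : ∀ e, Measurable (f e)
  measurable_finv : ∀ e, Measurable (finv e)
  mapsTo_f : ∀ e, Set.MapsTo (f e) (D (G.r e)) (R e)
  mapsTo_finv : ∀ e, Set.MapsTo (finv e) (R e) (D (G.r e))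
  f_finv : ∀ e, ∀ᵐ x ∂(μ.restrict (R e)), f e (finv e x) = x
  finv_f : ∀ e, ∀ᵐ x ∂(μ.restrict (D (G.r e))), finv e (f e x) = x
  pushforward_f_ac : ∀ e, (μ.restrict (R e)).map (finv e) ≪ μ.restrict (D (G.r e))
  pushforward_finv_ac : ∀ e, (μ.restrict (D (G.r e))).map (f e) ≪ μ.restrict (R e)

variable {G : Ultragraph V E} {X : Type w} [MeasurableSpace X] {μ : Measure X}

/-- `Φ_{f_e} = d(μ ∘ f_e)/dμ` (where `μ ∘ f_e` is the pushforward of `μ|_{R_e}` by `f_e⁻¹`). -/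
noncomputable def BranchingSystem.PhiF (B : BranchingSystem G X μ) (e : E) : X → ℝ≥0∞ :=
  ((μ.restrict (B.R e)).map (B.finv e)).rnDeriv μ

/-- `Φ_{f_e⁻¹} = d(μ ∘ f_e⁻¹)/dμ`. -/
noncomputable def BranchingSystem.PhiFinv (B : BranchingSystem G X μ) (e : E) : X → ℝ≥0∞ :=
  ((μ.restrict (B.D (G.r e))).map (B.f e)).rnDeriv μ

/-- `S_e φ = Φ_{f_e⁻¹}^{1/2} ⬝ (φ ∘ f_e⁻¹)`, extended by zero off `R_e`. -/
noncomputable def BranchingSystem.SFun (B : BranchingSystem G X μ) (e : E) (φ : X → ℂ) :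
    X → ℂ :=
  (B.R e).indicator fun x => (Real.sqrt ((B.PhiFinv e x).toReal) : ℂ) * φ (B.finv e x)

/-- `S_e^* φ = Φ_{f_e}^{1/2} ⬝ (φ ∘ f_e)`, extended by zero off `D_{r(e)}`. -/
noncomputable def BranchingSystem.SStarFun (B : BranchingSystem G X μ) (e : E) (φ : X → ℂ) :
    X → ℂ :=
  (B.D (G.r e)).indicator fun x => (Real.sqrt ((B.PhiF e x).toReal) : ℂ) * φ (B.f e x)

/-- `f_α = f_{α₁} ∘ ⋯ ∘ f_{αₙ}` for a path `α`. -/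
def BranchingSystem.fPath (B : BranchingSystem G X μ) :
    ∀ k : ℕ, (Fin (k + 1) → E) → X → X
  | 0, α => B.f (α 0)
  | k + 1, α => B.f (α 0) ∘ BranchingSystem.fPath B k fun i => α i.succ

/-- A Cuntz–Krieger `G`-family in a star ring. -/
structure CKFamily (G : Ultragraph V E) (A : Type w) [NonUnitalRing A] [StarRing A] where
  P : Set V → A
  S : E → A
  P_empty : P ∅ = 0
  P_star : ∀ B, G.InG0 B → star (P B) = P B
  P_mul : ∀ B C, G.InG0 B → G.InG0 C → P B * P C = P (B ∩ C)
  P_union : ∀ B C, G.InG0 B → G.InG0 C → P (B ∪ C) = P B + P C - P (B ∩ C)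
  S_orth : ∀ e e', e ≠ e' → star (S e) * S e' = 0
  S_star_mul : ∀ e, star (S e) * S e = P (G.r e)
  S_le : ∀ e, P {G.s e} * (S e * star (S e)) = S e * star (S e)
  CK : ∀ v, (h : {e | G.s e = v}.Finite) → {e | G.s e = v}.Nonempty →
    P {v} = ∑ e ∈ h.toFinset, S e * star (S e)

/-- `s_α = s_{α₁} ⋯ s_{αₙ}` for a path `α`. -/
def CKFamily.sPath {A : Type w} [NonUnitalRing A] [StarRing A] (F : CKFamily G A) :
    ∀ k : ℕ, (Fin (k + 1) → E) → A
  | 0, α => F.S (α 0)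
  | k + 1, α => F.S (α 0) * CKFamily.sPath F k fun i => α i.succ

def IsPath (G : Ultragraph V E) {k : ℕ} (α : Fin (k + 1) → E) : Prop :=
  ∀ i : Fin k, G.s (α i.succ) ∈ G.r (α i.castSucc)

def IsCycle (G : Ultragraph V E) {k : ℕ} (α : Fin (k + 1) → E) : Prop :=
  IsPath G α ∧ G.s (α 0) ∈ G.r (α (Fin.last k))

/-- A simple cycle without exits: a cycle with pairwise distinct edges such that each
`r(αᵢ)` is a singleton and `s⁻¹(s(αᵢ)) = {αᵢ}`. -/
def IsSimpleCycleNoExits (G : Ultragraph V E) {k : ℕ} (α : Fin (k + 1) → E) : Prop :=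
  IsCycle G α ∧ Function.Injective α ∧
    ∀ i, (∃ w, G.r (α i) = {w}) ∧ ∀ e, G.s e = G.s (α i) → e = α i

def HasExit (G : Ultragraph V E) {k : ℕ} (α : Fin (k + 1) → E) : Prop :=
  (∃ i : Fin k, {e | G.s e ∈ G.r (α i.castSucc)} ≠ {α i.succ}) ∨
  {e | G.s e ∈ G.r (α (Fin.last k))} ≠ {α 0} ∨
  ∃ i, ∃ v ∈ G.r (α i), ∀ e, G.s e ≠ v

def ConditionL (G : Ultragraph V E) : Prop :=
  ∀ (k : ℕ) (α : Fin (k + 1) → E), IsCycle G α → HasExit G α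

def Hereditary (G : Ultragraph V E) (H : Set (Set V)) : Prop :=
  (∀ A ∈ H, G.InG0 A) ∧ (∀ A ∈ H, ∀ B ∈ H, A ∪ B ∈ H) ∧
  (∀ A ∈ H, ∀ B, G.InG0 B → B ⊆ A → B ∈ H) ∧
  ∀ e, {G.s e} ∈ H → G.r e ∈ H

def Saturated (G : Ultragraph V E) (T : Set (Set V)) : Prop :=
  ∀ v, {e | G.s e = v}.Finite → {e | G.s e = v}.Nonempty →
    (∀ e, G.s e = v → G.r e ∈ T) → {v} ∈ T

end Ultragraph

/-- A closed two-sided (complex) ideal, as a subset. -/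
def IsClosedTwoSidedIdealIn (A : Type w) [NonUnitalNormedRing A] [Module ℂ A]
    (J : Set A) : Prop :=
  IsClosed J ∧ (0 : A) ∈ J ∧ (∀ x ∈ J, ∀ y ∈ J, x + y ∈ J) ∧
    (∀ (c : ℂ), ∀ x ∈ J, c • x ∈ J) ∧ ∀ x ∈ J, ∀ a, a * x ∈ J ∧ x * a ∈ J

/-- The smallest closed two-sided ideal containing `s`. -/
def idealGeneratedBy {A : Type w} [NonUnitalNormedRing A] [Module ℂ A] (s : Set A) : Set A :=
  ⋂₀ {J | IsClosedTwoSidedIdealIn A J ∧ s ⊆ J}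

namespace Ultragraph

/-- A model of the ultragraph C*-algebra `C*(G)`: a C*-algebra generated by a universal
Cuntz–Krieger `G`-family, together with its gauge action. -/
structure UltragraphCStarAlgebra (G : Ultragraph V E) (A : Type w)
    [NonUnitalNormedRing A] [StarRing A] [CStarRing A] [NormedSpace ℂ A]
    [IsScalarTower ℂ A A] [SMulCommClass ℂ A A] [StarModule ℂ A] [CompleteSpace A] where
  fam : CKFamily G A
  P_ne_zero : ∀ B, G.InG0 B → B.Nonempty → fam.P B ≠ 0
  generates : ∀ C : Set A, IsClosed C →
    (∀ x ∈ C, ∀ y ∈ C, x + y ∈ C) → (∀ x ∈ C, ∀ y ∈ C, x * y ∈ C) →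
    (∀ (c : ℂ), ∀ x ∈ C, c • x ∈ C) → (∀ x ∈ C, star x ∈ C) →
    (∀ B, G.InG0 B → fam.P B ∈ C) → (∀ e, fam.S e ∈ C) → ∀ x, x ∈ C
  gauge : ∀ z : ℂ, ‖z‖ = 1 → A ≃⋆ₐ[ℂ] A
  gauge_P : ∀ z hz B, G.InG0 B → gauge z hz (fam.P B) = fam.P B
  gauge_S : ∀ z hz e, gauge z hz (fam.S e) = z • fam.S e
  universal : ∀ (B : Type w) [NonUnitalNormedRing B] [StarRing B] [CStarRing B]
    [NormedSpace ℂ B] [IsScalarTower ℂ B B] [SMulCommClass ℂ B B] [StarModule ℂ B]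
    [CompleteSpace B], ∀ F : CKFamily G B,
    ∃ φ : A →⋆ₙₐ[ℂ] B, Continuous φ ∧
      (∀ C, G.InG0 C → φ (fam.P C) = F.P C) ∧ ∀ e, φ (fam.S e) = F.S e

end Ultragraph

namespace Ultragraph

variable {V : Type u} {E : Type v}

/-- `A` is an extreme (final) vertex with extreme edge `e`, relative to the edge set `F`. -/
def IsExtremeFin (G : Ultragraph V E) (F : Set E) (A : Set V) (e : E) : Prop :=
  e ∈ F ∧ A = G.r e ∧ (∀ f ∈ F, f ≠ e → A ∩ G.r f = ∅) ∧ ∀ f ∈ F, G.s f ∉ A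

/-- `A` is an extreme (initial) vertex with extreme edge `e`, relative to the edge set `F`. -/
def IsExtremeIni (G : Ultragraph V E) (F : Set E) (A : Set V) (e : E) : Prop :=
  e ∈ F ∧ A = {G.s e} ∧ (∀ f ∈ F, f ≠ e → G.s f ∉ A) ∧ ∀ f ∈ F, A ∩ G.r f = ∅

/-- Vertices isolated relative to the edge set `F`. -/
def Isol (G : Ultragraph V E) (F : Set E) : Set V :=
  {v | ∀ e ∈ F, v ∉ G.r e ∧ G.s e ≠ v}

/-- The decreasing sequence of edge sets: `Fs n` is the edge set of `𝔾ₙ`. -/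
def Fs (G : Ultragraph V E) : ℕ → Set E
  | 0 => Set.univ
  | n + 1 => Fs G n \ {e | ∃ A, IsExtremeFin G (Fs G n) A e ∨ IsExtremeIni G (Fs G n) A e}

/-- `XfinL G n` = the set `X_{n+1}^fin` of final extreme vertices (0-indexed). -/
def XfinL (G : Ultragraph V E) (n : ℕ) : Set (Set V) :=
  {A | ∃ e, IsExtremeFin G (Fs G n) A e}

/-- `XiniL G n` = the set `X_{n+1}^ini` of initial extreme vertices (0-indexed). -/
def XiniL (G : Ultragraph V E) (n : ℕ) : Set (Set V) :=
  {A | ∃ e, IsExtremeIni G (Fs G n) A e}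

/-- `XbarL G n` = `X̄_{n+1}` (0-indexed). -/
def XbarL (G : Ultragraph V E) (n : ℕ) : Set V := ⋃₀ (XfinL G n ∪ XiniL G n)

/-- `(level G n).1 = Iₙ` and `(level G n).2` = all vertices removed through stage `n`. -/
def level (G : Ultragraph V E) : ℕ → Set V × Set V
  | 0 => (Isol G Set.univ, Isol G Set.univ)
  | n + 1 =>
    (Isol G (Fs G (n + 1)) \ ((level G n).2 ∪ XbarL G n),
      (level G n).2 ∪ XbarL G n ∪ (Isol G (Fs G (n + 1)) \ ((level G n).2 ∪ XbarL G n)))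

variable {G : Ultragraph V E}

lemma Fs_succ_subset (n : ℕ) : Fs G (n + 1) ⊆ Fs G n := fun _ he => he.1

lemma Fs_antitone {m k : ℕ} (h : m ≤ k) : Fs G k ⊆ Fs G m := by
  induction k with
  | zero =>
    have : m = 0 := Nat.le_zero.mp h
    subst this; exact subset_rfl
  | succ k ih =>
    rcases Nat.lt_or_ge m (k + 1) with h' | h'
    · exact (Fs_succ_subset k).trans (ih (Nat.lt_succ_iff.mp h'))
    · have : m = k + 1 := le_antisymm h h'
      subst this; exact subset_rfl

lemma exists_stage {e : E} {N : ℕ} (h : e ∉ Fs G N) :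
    ∃ i < N, e ∈ Fs G i ∧
      ∃ A, IsExtremeFin G (Fs G i) A e ∨ IsExtremeIni G (Fs G i) A e := by
  induction N with
  | zero => exact absurd (Set.mem_univ e) h
  | succ N ih =>
    by_cases hN : e ∈ Fs G N
    · refine ⟨N, Nat.lt_succ_self N, hN, ?_⟩
      by_contra hc
      exact h ⟨hN, hc⟩
    · obtain ⟨i, hi, h1, h2⟩ := ih hN
      exact ⟨i, hi.trans (Nat.lt_succ_self N), h1, h2⟩

lemma level2_subset_succ (m : ℕ) : (level G m).2 ⊆ (level G (m + 1)).2 :=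
  fun _ hv => Or.inl (Or.inl hv)

lemma XbarL_subset_level2 {i m : ℕ} (h : i < m) : XbarL G i ⊆ (level G m).2 := by
  induction m with
  | zero => omega
  | succ m ih =>
    rcases Nat.lt_or_ge i m with h' | h'
    · exact (ih h').trans (level2_subset_succ m)
    · have : i = m := by omega
      subst this
      exact fun v hv => Or.inl (Or.inr hv)

/-- Structure of ultragraphs exhausted by extreme vertices and isolated vertices. -/
theorem extreme_vertices_structure (G : Ultragraph V E) (n : ℕ) (hn : 1 ≤ n)
    (hX : ∀ i < n, (XfinL G i ∪ XiniL G i).Nonempty)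
    (hcover : (⋃ e, G.r e) ∪ Set.range G.s =
      ⋃ i ∈ Finset.range n, (XbarL G i ∪ (level G (i + 1)).1)) :
    (∀ N < n, ∀ A ∈ XfinL G N ∪ XiniL G N, ∀ B ∈ XfinL G N ∪ XiniL G N,
      A ≠ B → A ∩ B = ∅) ∧
    (∀ N < n, ∀ A ∈ XfinL G N, ∀ e, G.s e ∈ A →
      G.r e ∈ ⋃ i ∈ Finset.range N, XfinL G i) ∧
    (∀ N, 1 ≤ N → N ≤ n → ∀ v ∈ (level G N).1, ∀ e, G.s e = v →
      G.r e ∈ ⋃ i ∈ Finset.range N, XfinL G i) ∧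
    ∀ N < n, ∀ v : V, {v} ∈ XiniL G N → ∀ e, G.s e = v →
      G.r e ⊆ (⋃ i ∈ Finset.range n, (⋃₀ XfinL G i ∪ (level G (i + 1)).1)) ∪
        ⋃ i ∈ Finset.Ico (N + 1) n, ⋃₀ XiniL G i := by
  refine ⟨?_, ?_, ?_, ?_⟩
  · -- Part 1: distinct extreme vertices at the same level are disjoint
    intro N _ A hA B hB hAB
    rcases hA with ⟨e, he⟩ | ⟨e, he⟩ <;> rcases hB with ⟨f, hf⟩ | ⟨f, hf⟩
    · have hef : e ≠ f := fun h => hAB (by rw [he.2.1, hf.2.1, h])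
      rw [hf.2.1]
      exact he.2.2.1 f hf.1 (Ne.symm hef)
    · rw [hf.2.1]
      exact Set.inter_singleton_eq_empty.mpr (he.2.2.2 f hf.1)
    · rw [he.2.1]
      exact Set.singleton_inter_eq_empty.mpr (hf.2.2.2 e he.1)
    · have hef : e ≠ f := fun h => hAB (by rw [he.2.1, hf.2.1, h])
      have hsf : G.s f ∉ A := he.2.2.1 f hf.1 (Ne.symm hef)
      rw [he.2.1, hf.2.1]
      refine Set.singleton_inter_eq_empty.mpr ?_
      intro hmem
      rw [Set.mem_singleton_iff] at hmem
      exact hsf (by rw [he.2.1, ← hmem]; exact rfl)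
  · -- Part 2
    intro N _ A hA e hse
    obtain ⟨e₀, he₀⟩ := hA
    have heN : e ∉ Fs G N := fun h => he₀.2.2.2 e h hse
    obtain ⟨i, hi, _, B, hB⟩ := exists_stage heN
    rcases hB with hfin | hini
    · exact Set.mem_iUnion₂.mpr ⟨i, Finset.mem_range.mpr hi, e, hfin.2.1 ▸ hfin⟩
    · exfalso
      have h1 : B ∩ G.r e₀ = ∅ := hini.2.2.2 e₀ (Fs_antitone hi.le he₀.1)
      have h2 : G.s e ∈ B ∩ G.r e₀ :=
        ⟨by rw [hini.2.1]; exact rfl, by rw [← he₀.2.1]; exact hse⟩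
      rw [h1] at h2
      exact h2
  · -- Part 3
    intro N hN1 _ v hv e hse
    obtain ⟨m, rfl⟩ : ∃ m, N = m + 1 := ⟨N - 1, by omega⟩
    have hvIsol : v ∈ Isol G (Fs G (m + 1)) := hv.1
    have hvnot : v ∉ (level G m).2 ∪ XbarL G m := hv.2
    have heN : e ∉ Fs G (m + 1) := fun h => (hvIsol e h).2 hse
    obtain ⟨i, hi, _, B, hB⟩ := exists_stage heN
    rcases hB with hfin | hini
    · exact Set.mem_iUnion₂.mpr ⟨i, Finset.mem_range.mpr hi, e, hfin.2.1 ▸ hfin⟩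
    · exfalso
      have hvX : v ∈ XbarL G i :=
        ⟨B, Or.inr ⟨e, hini⟩, by rw [hini.2.1]; exact Set.mem_singleton_iff.mpr hse.symm⟩
      rcases Nat.lt_or_ge i m with h' | h'
      · exact hvnot (Or.inl (XbarL_subset_level2 h' hvX))
      · have him : i = m := by omega
        exact hvnot (Or.inr (him ▸ hvX))
  · -- Part 4
    intro N hN v hvXini e hse w hw
    obtain ⟨e₀, he₀⟩ := hvXini
    by_cases heN : e ∈ Fs G N
    · -- use the covering hypothesis
      have hwL : w ∈ (⋃ e, G.r e) ∪ Set.range G.s := Or.inl (Set.mem_iUnion.mpr ⟨e, hw⟩)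
      rw [hcover] at hwL
      obtain ⟨i, hi, hwi⟩ := Set.mem_iUnion₂.mp hwL
      rcases hwi with hX | hI
      · obtain ⟨C, hC, hwC⟩ := hX
        rcases hC with hCfin | hCini
        · exact Or.inl (Set.mem_iUnion₂.mpr ⟨i, hi, Or.inl ⟨C, hCfin, hwC⟩⟩)
        · obtain ⟨f, hf⟩ := hCini
          have hiN : N + 1 ≤ i := by
            by_contra hcon
            have hile : i ≤ N := by omega
            have hemp := hf.2.2.2 e (Fs_antitone hile heN)
            rw [Set.eq_empty_iff_forall_notMem] at hemp
            exact hemp w ⟨hwC, hw⟩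
          exact Or.inr (Set.mem_iUnion₂.mpr
            ⟨i, Finset.mem_Ico.mpr ⟨hiN, Finset.mem_range.mp hi⟩, C, ⟨f, hf⟩, hwC⟩)
      · exact Or.inl (Set.mem_iUnion₂.mpr ⟨i, hi, Or.inr hI⟩)
    · -- e was removed at an earlier stage
      obtain ⟨i, hi, _, B, hB⟩ := exists_stage heN
      rcases hB with hfin | hini
      · exact Or.inl (Set.mem_iUnion₂.mpr ⟨i, Finset.mem_range.mpr (hi.trans hN),
          Or.inl ⟨G.r e, ⟨e, hfin.2.1 ▸ hfin⟩, hw⟩⟩)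
      · exfalso
        have hne : e₀ ≠ e := fun h => heN (h ▸ he₀.1)
        have hs0 : G.s e₀ ∉ B := hini.2.2.1 e₀ (Fs_antitone hi.le he₀.1) hne
        have hv0 : G.s e₀ = v := (Set.singleton_eq_singleton_iff.mp he₀.2.1).symm
        apply hs0
        rw [hini.2.1, Set.mem_singleton_iff, hv0, hse]

end Ultragraph
end

section
/- Let α be a simple cycle without exits in an ultragraph G, let {R_e, D_A, f_e} be a G-branching system on (X, μ) with induced representation π on L²(X, μ), and suppose E ⊆ D_{s(α₁)} is measurable with μ(E) ≠ 0 and f_{nα}(E) ∩ E = ∅ μ-a.e. for all n in finite sets ℱ, ℱ' ⊆ ℕ. Then for all complex scalars z, z_n (n ∈ ℱ), z_m' (m ∈ ℱ'), one has |z| ≤ ‖ z·π(p_{s(α₁)}) + Σ_{n∈ℱ} z_n·π(s_{nα}) + Σ_{m∈ℱ'} z_m'·π(s_{mα})* ‖, where the norm is the operator norm on L²(X, μ). -/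
open MeasureTheory Filter Set
open scoped ENNReal

universe u v w

namespace Ultragraph


namespace BranchingSystem

variable {V : Type u} {E : Type v} {G : Ultragraph V E} {X : Type w} [MeasurableSpace X]
  {μ : Measure X}

/-- Iterated `SFun` along a word of edges. -/
noncomputable def SChain (B : BranchingSystem G X μ) : List E → (X → ℂ) → X → ℂ
  | [], ψ => ψ
  | e :: l, ψ => B.SFun e (B.SChain l ψ)

/-- Iterated `finv` along a word of edges. -/
def GChain (B : BranchingSystem G X μ) : List E → X → X
  | [], x => x
  | e :: l, x => B.GChain l (B.finv e x)

/-- Iterated `f` along a word of edges. -/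
def FChain (B : BranchingSystem G X μ) : List E → X → X
  | [], x => x
  | e :: l, x => B.f e (B.FChain l x)

/-- The "domain chain" condition along a word of edges. -/
def InChain (B : BranchingSystem G X μ) : List E → X → Prop
  | [], _ => True
  | e :: l, x => x ∈ B.R e ∧ B.InChain l (B.finv e x)

@[simp] lemma sChain_nil (B : BranchingSystem G X μ) (ψ : X → ℂ) : B.SChain [] ψ = ψ := rfl

@[simp] lemma sChain_cons (B : BranchingSystem G X μ) (e : E) (l : List E) (ψ : X → ℂ) :
    B.SChain (e :: l) ψ = B.SFun e (B.SChain l ψ) := rfl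

@[simp] lemma fChain_nil (B : BranchingSystem G X μ) (x : X) : B.FChain [] x = x := rfl

@[simp] lemma fChain_cons (B : BranchingSystem G X μ) (e : E) (l : List E) (x : X) :
    B.FChain (e :: l) x = B.f e (B.FChain l x) := rfl

@[simp] lemma gChain_nil (B : BranchingSystem G X μ) (x : X) : B.GChain [] x = x := rfl

@[simp] lemma gChain_cons (B : BranchingSystem G X μ) (e : E) (l : List E) (x : X) :
    B.GChain (e :: l) x = B.GChain l (B.finv e x) := rfl

lemma inChain_cons (B : BranchingSystem G X μ) (e : E) (l : List E) (x : X) :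
    B.InChain (e :: l) x ↔ x ∈ B.R e ∧ B.InChain l (B.finv e x) := Iff.rfl

lemma null_preimage (B : BranchingSystem G X μ) (e : E) {N : Set X}
    (hNm : MeasurableSet N) (hN : μ N = 0) :
    μ (B.finv e ⁻¹' N ∩ B.R e) = 0 := by
  rw [← Measure.restrict_apply' (B.measurableSet_R e),
    ← Measure.map_apply (B.measurable_finv e) hNm]
  exact B.pushforward_f_ac e
    (le_antisymm ((Measure.restrict_apply_le _ _).trans hN.le) (zero_le))

lemma sFun_congr (B : BranchingSystem G X μ) (e : E) {ψ ψ' : X → ℂ} (h : ψ =ᵐ[μ] ψ') :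
    B.SFun e ψ =ᵐ[μ] B.SFun e ψ' := by
  have hN : μ (toMeasurable μ {x | ¬ ψ x = ψ' x}) = 0 := by
    rw [measure_toMeasurable]; exact ae_iff.mp h
  have hM := B.null_preimage e (measurableSet_toMeasurable _ _) hN
  filter_upwards [compl_mem_ae_iff.mpr hM] with x hx
  unfold SFun
  by_cases hxR : x ∈ B.R e
  · have h1 : B.finv e x ∉ toMeasurable μ {x | ¬ ψ x = ψ' x} := fun hmem => hx ⟨hmem, hxR⟩
    have hval : ψ (B.finv e x) = ψ' (B.finv e x) := by
      by_contra hne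
      exact h1 (subset_toMeasurable _ _ hne)
    rw [Set.indicator_of_mem hxR, Set.indicator_of_mem hxR, hval]
  · rw [Set.indicator_of_notMem hxR, Set.indicator_of_notMem hxR]

lemma sChain_congr (B : BranchingSystem G X μ) (l : List E) {ψ ψ' : X → ℂ}
    (h : ψ =ᵐ[μ] ψ') : B.SChain l ψ =ᵐ[μ] B.SChain l ψ' := by
  induction l with
  | nil => exact h
  | cons e l ih =>
    rw [B.sChain_cons, B.sChain_cons]
    exact B.sFun_congr e ih

lemma sChain_append (B : BranchingSystem G X μ) (l₁ l₂ : List E) (ψ : X → ℂ) :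
    B.SChain (l₁ ++ l₂) ψ = B.SChain l₁ (B.SChain l₂ ψ) := by
  induction l₁ with
  | nil => rfl
  | cons e l ih => simp only [List.cons_append, sChain_cons, ih]

lemma fChain_append (B : BranchingSystem G X μ) (l₁ l₂ : List E) (x : X) :
    B.FChain (l₁ ++ l₂) x = B.FChain l₁ (B.FChain l₂ x) := by
  induction l₁ with
  | nil => rfl
  | cons e l ih => simp only [List.cons_append, fChain_cons, ih]

lemma inChain_of_ne_zero (B : BranchingSystem G X μ) :
    ∀ (l : List E) (ψ : X → ℂ) (x : X),
      B.SChain l ψ x ≠ 0 → B.InChain l x ∧ ψ (B.GChain l x) ≠ 0 := by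
  intro l
  induction l with
  | nil => intro ψ x h; exact ⟨trivial, h⟩
  | cons e l ih =>
    intro ψ x h
    rw [B.sChain_cons] at h
    have h' : (B.R e).indicator
        (fun y => (Real.sqrt ((B.PhiFinv e y).toReal) : ℂ) * B.SChain l ψ (B.finv e y)) x ≠ 0 := h
    by_cases hxR : x ∈ B.R e
    · rw [Set.indicator_of_mem hxR] at h'
      have h2 : B.SChain l ψ (B.finv e x) ≠ 0 := right_ne_zero_of_mul h'
      obtain ⟨hc, hv⟩ := ih ψ (B.finv e x) h2
      exact ⟨⟨hxR, hc⟩, hv⟩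
    · rw [Set.indicator_of_notMem hxR] at h'
      exact absurd rfl h'

lemma ae_fChain_gChain (B : BranchingSystem G X μ) (l : List E) :
    ∀ᵐ x ∂μ, B.InChain l x → B.FChain l (B.GChain l x) = x := by
  induction l with
  | nil => filter_upwards with x _; rfl
  | cons e l ih =>
    have hBad : μ (toMeasurable μ
        {y | ¬ (B.InChain l y → B.FChain l (B.GChain l y) = y)}) = 0 := by
      rw [measure_toMeasurable]; exact ae_iff.mp ih
    have hM1 := B.null_preimage e (measurableSet_toMeasurable _ _) hBad
    have hM2 : μ ({x | ¬ B.f e (B.finv e x) = x} ∩ B.R e) = 0 := by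
      rw [← Measure.restrict_apply' (B.measurableSet_R e)]
      exact ae_iff.mp (B.f_finv e)
    filter_upwards [compl_mem_ae_iff.mpr hM1, compl_mem_ae_iff.mpr hM2] with x hx1 hx2 hch
    obtain ⟨hxR, hch'⟩ := hch
    have h1 : B.finv e x ∉ toMeasurable μ
        {y | ¬ (B.InChain l y → B.FChain l (B.GChain l y) = y)} := fun hm => hx1 ⟨hm, hxR⟩
    have h2 : B.FChain l (B.GChain l (B.finv e x)) = B.finv e x := by
      by_contra hne
      exact h1 (subset_toMeasurable _ _ (fun himp => hne (himp hch')))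
    show B.f e (B.FChain l (B.GChain l (B.finv e x))) = x
    rw [h2]
    by_contra hne
    exact hx2 ⟨hne, hxR⟩

lemma fChain_ofFn (B : BranchingSystem G X μ) :
    ∀ (k : ℕ) (α : Fin (k + 1) → E), B.FChain (List.ofFn α) = B.fPath k α := by
  intro k
  induction k with
  | zero => intro α; funext x; rw [List.ofFn_succ, List.ofFn_zero]; rfl
  | succ k ih =>
    intro α; funext x
    rw [List.ofFn_succ]
    show B.f (α 0) (B.FChain (List.ofFn fun i => α i.succ) x) = B.fPath (k + 1) α x
    rw [ih]
    rfl

lemma fChain_join_replicate (B : BranchingSystem G X μ) (l : List E) :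
    ∀ n : ℕ, B.FChain (List.flatten (List.replicate n l)) = (B.FChain l)^[n] := by
  intro n
  induction n with
  | zero => rfl
  | succ n ih =>
    funext x
    rw [List.replicate_succ, List.flatten_cons, B.fChain_append, ih,
      Function.iterate_succ_apply']

end BranchingSystem

/-- The key norm estimate: restricting to a set `E` moved off itself by the iterates of
`f_α` shows `|z| ≤ ‖z·π(p_{s(α₁)}) + Σ zₙ·π(s_{nα}) + Σ zₘ'·π(s_{mα})*‖`. -/
theorem norm_estimate_of_moving_set
    {V E : Type*} {G : Ultragraph V E}
    {X : Type*} [MeasurableSpace X] {μ : Measure X} [SigmaFinite μ]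
    (BS : BranchingSystem G X μ)
    {A : Type*} [NonUnitalNormedRing A] [StarRing A] [CStarRing A] [NormedSpace ℂ A]
    [IsScalarTower ℂ A A] [SMulCommClass ℂ A A] [StarModule ℂ A] [CompleteSpace A]
    (UA : UltragraphCStarAlgebra G A)
    (π : A →⋆ₙₐ[ℂ] (Lp ℂ 2 μ →L[ℂ] Lp ℂ 2 μ))
    (hπP : ∀ B, G.InG0 B → ∀ φ : Lp ℂ 2 μ,
      ⇑(π (UA.fam.P B) φ) =ᵐ[μ] (BS.D B).indicator ⇑φ)
    (hπS : ∀ e, ∀ φ : Lp ℂ 2 μ, ⇑(π (UA.fam.S e) φ) =ᵐ[μ] BS.SFun e ⇑φ)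
    (k : ℕ) (α : Fin (k + 1) → E) (hα : IsSimpleCycleNoExits G α)
    (Eset : Set X) (hEmeas : MeasurableSet Eset) (hEsub : Eset ⊆ BS.D {G.s (α 0)})
    (hEpos : μ Eset ≠ 0)
    (𝓕 𝓕' : Finset ℕ) (hpos : ∀ n ∈ 𝓕 ∪ 𝓕', 0 < n)
    (hdisj : ∀ n ∈ 𝓕 ∪ 𝓕', μ ((BS.fPath k α)^[n] '' Eset ∩ Eset) = 0)
    (z : ℂ) (zn zm : ℕ → ℂ) :
    ‖z‖ ≤ ‖z • π (UA.fam.P {G.s (α 0)}) +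
        ∑ n ∈ 𝓕, zn n • (π (UA.fam.sPath k α)) ^ n +
        ∑ m ∈ 𝓕', zm m • (star (π (UA.fam.sPath k α))) ^ m‖ := by

  classical
  obtain ⟨F, hFm, hFsub, hFpos, hFfin⟩ :=
    Measure.exists_subset_measure_lt_top hEmeas (pos_iff_ne_zero.mpr hEpos)
  set W : List E := List.ofFn α with hW
  set S : Lp ℂ 2 μ →L[ℂ] Lp ℂ 2 μ := π (UA.fam.sPath k α) with hS
  set ψF : Lp ℂ 2 μ := indicatorConstLp 2 hFm hFfin.ne (1 : ℂ) with hψF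
  have hnorm : ‖ψF‖ = (μ F).toReal ^ (1/2 : ℝ) := by
    rw [hψF, norm_indicatorConstLp (by norm_num) (by norm_num)]
    norm_num
    rfl
  have hnpos : 0 < ‖ψF‖ := by
    rw [hnorm]
    exact Real.rpow_pos_of_pos (ENNReal.toReal_pos hFpos.ne' hFfin.ne) _
  set c : ℂ := ((‖ψF‖⁻¹ : ℝ) : ℂ) with hc
  set φ : Lp ℂ 2 μ := c • ψF with hφ
  have hφnorm : ‖φ‖ = 1 := by
    rw [hφ, norm_smul, hc]
    rw [Complex.norm_real, Real.norm_eq_abs, abs_of_pos (inv_pos.mpr hnpos),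
      inv_mul_cancel₀ hnpos.ne']
  set ψ0 : X → ℂ := F.indicator (fun _ => c) with hψ0
  have hφae : ⇑φ =ᵐ[μ] ψ0 := by
    have h2 : ⇑ψF =ᵐ[μ] F.indicator (fun _ => (1 : ℂ)) := indicatorConstLp_coeFn
    filter_upwards [Lp.coeFn_smul c ψF, h2] with x h1 h2
    rw [hφ] at *
    rw [h1, Pi.smul_apply, h2, smul_eq_mul, hψ0]
    by_cases hx : x ∈ F
    · rw [Set.indicator_of_mem hx, Set.indicator_of_mem hx, mul_one]
    · rw [Set.indicator_of_notMem hx, Set.indicator_of_notMem hx, mul_zero]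
  have hψ0off : ∀ x, x ∉ F → ψ0 x = 0 := fun x hx => Set.indicator_of_notMem hx _
  -- π of sPath acts as SChain along the word W
  have P1 : ∀ (k' : ℕ) (α' : Fin (k' + 1) → E) (ψ : Lp ℂ 2 μ),
      ⇑(π (UA.fam.sPath k' α') ψ) =ᵐ[μ] BS.SChain (List.ofFn α') ⇑ψ := by
    intro k'
    induction k' with
    | zero =>
      intro α' ψ
      rw [List.ofFn_succ]
      simp only [List.ofFn_zero, BranchingSystem.sChain_cons, BranchingSystem.sChain_nil]
      exact hπS (α' 0) ψ
    | succ k'' ih =>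
      intro α' ψ
      have hmul : π (UA.fam.sPath (k'' + 1) α') ψ
          = π (UA.fam.S (α' 0)) (π (UA.fam.sPath k'' fun i => α' i.succ) ψ) := by
        rw [show UA.fam.sPath (k'' + 1) α'
          = UA.fam.S (α' 0) * UA.fam.sPath k'' (fun i => α' i.succ) from rfl, map_mul]
        rfl
      rw [hmul]
      calc ⇑(π (UA.fam.S (α' 0)) (π (UA.fam.sPath k'' fun i => α' i.succ) ψ))
          =ᵐ[μ] BS.SFun (α' 0) ⇑(π (UA.fam.sPath k'' fun i => α' i.succ) ψ) := hπS _ _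
        _ =ᵐ[μ] BS.SFun (α' 0) (BS.SChain (List.ofFn fun i => α' i.succ) ⇑ψ) :=
            BS.sFun_congr _ (ih _ ψ)
        _ = BS.SChain (List.ofFn α') ⇑ψ := by
            conv_rhs => rw [List.ofFn_succ]
            rw [BranchingSystem.sChain_cons]
  have P2 : ∀ (n : ℕ) (ψ : Lp ℂ 2 μ),
      ⇑((S ^ n) ψ) =ᵐ[μ] BS.SChain (List.flatten (List.replicate n W)) ⇑ψ := by
    intro n
    induction n with
    | zero =>
      intro ψ
      simp only [pow_zero, ContinuousLinearMap.one_apply, List.replicate_zero,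
        List.flatten_nil, BranchingSystem.sChain_nil]
      exact Filter.EventuallyEq.rfl
    | succ n ih =>
      intro ψ
      have hstep : (S ^ (n + 1)) ψ = S ((S ^ n) ψ) := by
        rw [pow_succ']; rfl
      rw [hstep, hS]
      calc ⇑(π (UA.fam.sPath k α) ((S ^ n) ψ))
          =ᵐ[μ] BS.SChain W ⇑((S ^ n) ψ) := P1 k α _
        _ =ᵐ[μ] BS.SChain W (BS.SChain (List.flatten (List.replicate n W)) ⇑ψ) :=
            BS.sChain_congr W (ih ψ)
        _ = BS.SChain (List.flatten (List.replicate (n + 1) W)) ⇑ψ := by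
            rw [List.replicate_succ, List.flatten_cons, BS.sChain_append]
  -- vanishing on Eset
  have V : ∀ n ∈ 𝓕 ∪ 𝓕', ∀ᵐ x ∂μ, x ∈ Eset →
      BS.SChain (List.flatten (List.replicate n W)) ψ0 x = 0 := by
    intro n hn
    set l := List.flatten (List.replicate n W) with hl
    have hnull : μ (BS.FChain l '' Eset ∩ Eset) = 0 := by
      rw [hl, BS.fChain_join_replicate W n, hW, BS.fChain_ofFn k α]
      exact hdisj n hn
    have hC := BS.ae_fChain_gChain l
    rw [ae_iff]
    refine measure_mono_null (fun x hx => ?_) (measure_union_null (ae_iff.mp hC) hnull)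
    simp only [Set.mem_setOf_eq, Classical.not_imp] at hx
    obtain ⟨hxE, hne⟩ := hx
    obtain ⟨hch, hval⟩ := BS.inChain_of_ne_zero l ψ0 x hne
    have hGF : BS.GChain l x ∈ F := by
      by_contra hG
      exact hval (hψ0off _ hG)
    by_cases hCx : BS.InChain l x → BS.FChain l (BS.GChain l x) = x
    · exact Or.inr ⟨⟨BS.GChain l x, hFsub hGF, hCx hch⟩, hxE⟩
    · exact Or.inl hCx
  -- inner products
  have hinner : ∀ ψ1 ψ2 : Lp ℂ 2 μ,
      (inner ℂ ψ1 ψ2 : ℂ) = ∫ x, (starRingEnd ℂ) (ψ1 x) * ψ2 x ∂μ := by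
    intro ψ1 ψ2
    rw [MeasureTheory.L2.inner_def]
    congr 1; funext a; rw [RCLike.inner_apply, mul_comm]
  have hπPφ : ⇑(π (UA.fam.P {G.s (α 0)}) φ) =ᵐ[μ] ⇑φ := by
    filter_upwards [hπP _ (InG0.singleton _) φ, hφae] with x h1 h2
    rw [h1]
    by_cases hxD : x ∈ BS.D {G.s (α 0)}
    · exact Set.indicator_of_mem hxD _
    · rw [Set.indicator_of_notMem hxD, h2, hψ0off x (fun hF => hxD (hEsub (hFsub hF)))]
  have hIP : (inner ℂ φ (π (UA.fam.P {G.s (α 0)}) φ) : ℂ) = 1 := by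
    have h1 : (inner ℂ φ (π (UA.fam.P {G.s (α 0)}) φ) : ℂ) = inner ℂ φ φ := by
      rw [hinner, hinner]
      refine integral_congr_ae ?_
      filter_upwards [hπPφ] with x hx
      rw [hx]
    rw [h1, inner_self_eq_norm_sq_to_K, hφnorm]
    norm_num
  have hVan : ∀ n ∈ 𝓕 ∪ 𝓕', ∀ᵐ x ∂μ,
      (starRingEnd ℂ) (⇑φ x) * ⇑((S ^ n) φ) x = 0 ∧
      (starRingEnd ℂ) (⇑((S ^ n) φ) x) * ⇑φ x = 0 := by
    intro n hn
    have hSn : ⇑((S ^ n) φ) =ᵐ[μ] BS.SChain (List.flatten (List.replicate n W)) ψ0 :=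
      (P2 n φ).trans (BS.sChain_congr _ hφae)
    filter_upwards [hSn, hφae, V n hn] with x h1 h2 h3
    by_cases hxF : x ∈ F
    · have hx0 : BS.SChain (List.flatten (List.replicate n W)) ψ0 x = 0 := h3 (hFsub hxF)
      rw [h1, hx0, mul_zero, map_zero, zero_mul]
      exact ⟨rfl, rfl⟩
    · rw [h2, hψ0off x hxF, map_zero, zero_mul, mul_zero]
      exact ⟨rfl, rfl⟩
  have hZn : ∀ n ∈ 𝓕, (inner ℂ φ ((S ^ n) φ) : ℂ) = 0 := by
    intro n hn
    rw [hinner]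
    rw [show (0 : ℂ) = ∫ _ : X, (0 : ℂ) ∂μ by rw [integral_zero]]
    refine integral_congr_ae ?_
    exact (hVan n (Finset.mem_union_left _ hn)).mono fun x hx => hx.1
  have hZm : ∀ m ∈ 𝓕', (inner ℂ φ (((star S) ^ m) φ) : ℂ) = 0 := by
    intro m hm
    have h1 : (star S) ^ m = ContinuousLinearMap.adjoint (S ^ m) := by
      rw [← star_pow, ContinuousLinearMap.star_eq_adjoint]
    rw [h1, ContinuousLinearMap.adjoint_inner_right, hinner]
    rw [show (0 : ℂ) = ∫ _ : X, (0 : ℂ) ∂μ by rw [integral_zero]]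
    refine integral_congr_ae ?_
    exact (hVan m (Finset.mem_union_right _ hm)).mono fun x hx => hx.2
  set T : Lp ℂ 2 μ →L[ℂ] Lp ℂ 2 μ := z • π (UA.fam.P {G.s (α 0)}) +
      ∑ n ∈ 𝓕, zn n • S ^ n + ∑ m ∈ 𝓕', zm m • (star S) ^ m with hT
  have hTinner : (inner ℂ φ (T φ) : ℂ) = z := by
    rw [hT]
    simp only [ContinuousLinearMap.add_apply, ContinuousLinearMap.smul_apply,
      ContinuousLinearMap.sum_apply]
    rw [inner_add_right, inner_add_right, inner_smul_right, hIP, inner_sum, inner_sum]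
    have e1 : ∑ n ∈ 𝓕, (inner ℂ φ (zn n • (S ^ n) φ) : ℂ) = 0 := by
      refine Finset.sum_eq_zero fun n hn => ?_
      rw [inner_smul_right, hZn n hn, mul_zero]
    have e2 : ∑ m ∈ 𝓕', (inner ℂ φ (zm m • ((star S) ^ m) φ) : ℂ) = 0 := by
      refine Finset.sum_eq_zero fun m hm => ?_
      rw [inner_smul_right, hZm m hm, mul_zero]
    rw [e1, e2, mul_one, add_zero, add_zero]
  calc ‖z‖ = ‖(inner ℂ φ (T φ) : ℂ)‖ := by rw [hTinner]
    _ ≤ ‖φ‖ * ‖T φ‖ := norm_inner_le_norm _ _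
    _ ≤ ‖φ‖ * (‖T‖ * ‖φ‖) :=
        mul_le_mul_of_nonneg_left (T.le_opNorm φ) (norm_nonneg _)
    _ = ‖T‖ := by rw [hφnorm]; ring


end Ultragraph
end
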